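/- Fix real numbers a, b with 1 < a ≤ b. Then the period integral J₄(a,b;t) = ∫_{1}^{b} √((z+a)/((t²−z²)(z²−1)(b−z))) dz tends to +∞ as t tends to b from the right. -/

import Mathlib

open MeasureTheory intervalIntegral Real Filter Topology Set

/-- Period integral `I₁`. -/
noncomputable def I1 (a b t : ℝ) : ℝ :=
  ∫ z in (-t)..(-a), Real.sqrt ((b - z) / ((t ^ 2 - z ^ 2) * (z ^ 2 - 1) * (-z - a)))

/-- Period integral `J₁`. -/
noncomputable def J1 (a b t : ℝ) : ℝ :=
  ∫ z in (-t)..(-a), Real.sqrt ((-z - a) / ((t ^ 2 - z ^ 2) * (z ^ 2 - 1) * (b - z)))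

/-- Period integral `I₂`. -/
noncomputable def I2 (a b t : ℝ) : ℝ :=
  ∫ z in (-a)..(-1), Real.sqrt ((b - z) / ((t ^ 2 - z ^ 2) * (z ^ 2 - 1) * (z + a)))

/-- Period integral `J₂`. -/
noncomputable def J2 (a b t : ℝ) : ℝ :=
  ∫ z in (-a)..(-1), Real.sqrt ((z + a) / ((t ^ 2 - z ^ 2) * (z ^ 2 - 1) * (b - z)))

/-- Period integral `I₄`. -/
noncomputable def I4 (a b t : ℝ) : ℝ :=
  ∫ z in (1:ℝ)..b, Real.sqrt ((b - z) / ((t ^ 2 - z ^ 2) * (z ^ 2 - 1) * (z + a)))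

/-- Period integral `J₄`. -/
noncomputable def J4 (a b t : ℝ) : ℝ :=
  ∫ z in (1:ℝ)..b, Real.sqrt ((z + a) / ((t ^ 2 - z ^ 2) * (z ^ 2 - 1) * (b - z)))

/-- Period integral `I₅`. -/
noncomputable def I5 (a b t : ℝ) : ℝ :=
  ∫ z in b..t, Real.sqrt ((z - b) / ((t ^ 2 - z ^ 2) * (z ^ 2 - 1) * (z + a)))

/-- Period integral `J₅`. -/
noncomputable def J5 (a b t : ℝ) : ℝ :=
  ∫ z in b..t, Real.sqrt ((z + a) / ((t ^ 2 - z ^ 2) * (z ^ 2 - 1) * (z - b)))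

/-- The period quotient `Q(a,b;t)`. -/
noncomputable def Q (a b t : ℝ) : ℝ :=
  (I1 a b t + I5 a b t) / (I2 a b t + I4 a b t)
    - (J1 a b t + J5 a b t) / (J2 a b t + J4 a b t)

/-- `J₄(a,b;t) → +∞` as `t → b⁺`. -/

lemma aux_integrable (a b t : ℝ) (ha : 1 < a) (hab : a ≤ b) (ht : b < t) :
    IntervalIntegrable
      (fun z => Real.sqrt ((z + a) / ((t ^ 2 - z ^ 2) * (z ^ 2 - 1) * (b - z))))
      volume 1 b := by
  have hb : 1 < b := lt_of_lt_of_le ha hab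
  have hδ : 0 < t ^ 2 - b ^ 2 := by nlinarith
  rw [intervalIntegrable_iff_integrableOn_Ioo_of_le hb.le]
  set K : ℝ := Real.sqrt ((b + a) / (2 * (t ^ 2 - b ^ 2))) * Real.sqrt (2 / (b - 1)) with hK
  have h1 : IntervalIntegrable (fun z : ℝ => (z - 1) ^ (-(1/2) : ℝ)) volume 1 b := by
    have := (intervalIntegrable_rpow' (r := -(1/2)) (by norm_num)
        (a := 0) (b := b - 1)).comp_sub_right 1
    simpa using this
  have h2 : IntervalIntegrable (fun z : ℝ => (b - z) ^ (-(1/2) : ℝ)) volume 1 b := by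
    have := (intervalIntegrable_rpow' (r := -(1/2)) (by norm_num)
        (a := b - 1) (b := 0)).comp_sub_left b
    simpa using this
  have hg : IntervalIntegrable (fun z : ℝ =>
      K * ((z - 1) ^ (-(1/2) : ℝ) + (b - z) ^ (-(1/2) : ℝ))) volume 1 b :=
    (h1.add h2).const_mul K
  rw [intervalIntegrable_iff_integrableOn_Ioo_of_le hb.le] at hg
  refine hg.mono' ?_ ?_
  · refine (Measurable.aestronglyMeasurable ?_)
    exact (measurable_id.add_const a |>.div
      (((measurable_const.sub (measurable_id.pow_const 2)).mul
        ((measurable_id.pow_const 2).sub measurable_const)).mul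
        (measurable_const.sub measurable_id))).sqrt
  · filter_upwards [ae_restrict_mem measurableSet_Ioo] with z hz
    obtain ⟨hz1, hzb⟩ := hz
    have hu : 0 < z - 1 := by linarith
    have hv : 0 < b - z := by linarith
    rw [Real.norm_eq_abs, abs_of_nonneg (Real.sqrt_nonneg _)]
    have hden1 : 0 < t ^ 2 - z ^ 2 := by nlinarith
    have hden2 : 0 < z ^ 2 - 1 := by nlinarith
    -- numerical bound
    have step1 : (z + a) / ((t ^ 2 - z ^ 2) * (z ^ 2 - 1) * (b - z))
        ≤ (b + a) / (2 * (t ^ 2 - b ^ 2) * ((z - 1) * (b - z))) := by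
      apply div_le_div₀ (by linarith) (by linarith) (by positivity)
      have h2u : 2 * (z - 1) ≤ z ^ 2 - 1 := by nlinarith
      have hδ' : t ^ 2 - b ^ 2 ≤ t ^ 2 - z ^ 2 := by nlinarith
      calc 2 * (t ^ 2 - b ^ 2) * ((z - 1) * (b - z))
          = (t ^ 2 - b ^ 2) * (2 * (z - 1)) * (b - z) := by ring
        _ ≤ (t ^ 2 - z ^ 2) * (z ^ 2 - 1) * (b - z) := by
            apply mul_le_mul_of_nonneg_right _ hv.le
            exact mul_le_mul hδ' h2u (by linarith) hden1.le
    have step2 : Real.sqrt ((z + a) / ((t ^ 2 - z ^ 2) * (z ^ 2 - 1) * (b - z)))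
        ≤ Real.sqrt ((b + a) / (2 * (t ^ 2 - b ^ 2))) *
          ((Real.sqrt (z - 1))⁻¹ * (Real.sqrt (b - z))⁻¹) := by
      refine le_trans (Real.sqrt_le_sqrt step1) ?_
      rw [show (b + a) / (2 * (t ^ 2 - b ^ 2) * ((z - 1) * (b - z)))
          = (b + a) / (2 * (t ^ 2 - b ^ 2)) * ((z - 1) * (b - z))⁻¹ by
            field_simp]
      rw [Real.sqrt_mul (by positivity), Real.sqrt_inv, Real.sqrt_mul hu.le, mul_inv]
    have key : (Real.sqrt (z - 1))⁻¹ * (Real.sqrt (b - z))⁻¹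
        ≤ Real.sqrt (2 / (b - 1)) * ((Real.sqrt (z - 1))⁻¹ + (Real.sqrt (b - z))⁻¹) := by
      have hhalf : Real.sqrt (2 / (b - 1)) = (Real.sqrt ((b - 1) / 2))⁻¹ := by
        rw [← Real.sqrt_inv]; norm_num
      rcases le_total (z - 1) (b - z) with hle | hle
      · have hv2 : (b - 1) / 2 ≤ b - z := by linarith
        have : (Real.sqrt (b - z))⁻¹ ≤ Real.sqrt (2 / (b - 1)) := by
          rw [hhalf]
          exact inv_anti₀ (Real.sqrt_pos.2 (by linarith)) (Real.sqrt_le_sqrt hv2)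
        calc (Real.sqrt (z - 1))⁻¹ * (Real.sqrt (b - z))⁻¹
            ≤ (Real.sqrt (z - 1))⁻¹ * Real.sqrt (2 / (b - 1)) := by
              exact mul_le_mul_of_nonneg_left this (by positivity)
          _ = Real.sqrt (2 / (b - 1)) * (Real.sqrt (z - 1))⁻¹ := by ring
          _ ≤ _ := by
              apply mul_le_mul_of_nonneg_left _ (Real.sqrt_nonneg _)
              simp [le_add_iff_nonneg_right]
      · have hu2 : (b - 1) / 2 ≤ z - 1 := by linarith
        have : (Real.sqrt (z - 1))⁻¹ ≤ Real.sqrt (2 / (b - 1)) := by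
          rw [hhalf]
          exact inv_anti₀ (Real.sqrt_pos.2 (by linarith)) (Real.sqrt_le_sqrt hu2)
        calc (Real.sqrt (z - 1))⁻¹ * (Real.sqrt (b - z))⁻¹
            ≤ Real.sqrt (2 / (b - 1)) * (Real.sqrt (b - z))⁻¹ :=
              mul_le_mul_of_nonneg_right this (by positivity)
          _ ≤ _ := by
              apply mul_le_mul_of_nonneg_left _ (Real.sqrt_nonneg _)
              simp [le_add_iff_nonneg_left]
    have hrpow1 : (z - 1) ^ (-(1/2) : ℝ) = (Real.sqrt (z - 1))⁻¹ := by
      rw [Real.rpow_neg hu.le, ← Real.sqrt_eq_rpow]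
    have hrpow2 : (b - z) ^ (-(1/2) : ℝ) = (Real.sqrt (b - z))⁻¹ := by
      rw [Real.rpow_neg hv.le, ← Real.sqrt_eq_rpow]
    rw [hK, hrpow1, hrpow2]
    calc Real.sqrt ((z + a) / ((t ^ 2 - z ^ 2) * (z ^ 2 - 1) * (b - z)))
        ≤ Real.sqrt ((b + a) / (2 * (t ^ 2 - b ^ 2))) *
          ((Real.sqrt (z - 1))⁻¹ * (Real.sqrt (b - z))⁻¹) := step2
      _ ≤ Real.sqrt ((b + a) / (2 * (t ^ 2 - b ^ 2))) *
          (Real.sqrt (2 / (b - 1)) * ((Real.sqrt (z - 1))⁻¹ + (Real.sqrt (b - z))⁻¹)) :=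
          mul_le_mul_of_nonneg_left key (Real.sqrt_nonneg _)
      _ = Real.sqrt ((b + a) / (2 * (t ^ 2 - b ^ 2))) * Real.sqrt (2 / (b - 1)) *
          ((Real.sqrt (z - 1))⁻¹ + (Real.sqrt (b - z))⁻¹) := by ring


lemma aux_lower (a b t : ℝ) (ha : 1 < a) (hab : a ≤ b) (ht1 : b < t)
    (ht2 : t < b + min ((b - 1) / 2) 1) :
    (2 * Real.sqrt ((b + 1) * (b ^ 2 - 1)))⁻¹ * (Real.log ((b - 1) / 2) - Real.log (t - b))
      ≤ ∫ z in (1:ℝ)..b,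
          Real.sqrt ((z + a) / ((t ^ 2 - z ^ 2) * (z ^ 2 - 1) * (b - z))) := by
  have hb : 1 < b := lt_of_lt_of_le ha hab
  set f : ℝ → ℝ := fun z =>
    Real.sqrt ((z + a) / ((t ^ 2 - z ^ 2) * (z ^ 2 - 1) * (b - z))) with hf
  set s : ℝ := t - b with hs
  set m : ℝ := (1 + b) / 2 with hm
  have hs0 : 0 < s := by simp [hs]; linarith
  have hs1 : s < (b - 1) / 2 := by
    have := lt_of_lt_of_le ht2 (by simp [min_le_left] : b + min ((b-1)/2) 1 ≤ b + (b-1)/2)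
    simp [hs]; linarith
  have hst : t < b + 1 := by
    have := lt_of_lt_of_le ht2 (by simp [min_le_right] : b + min ((b-1)/2) 1 ≤ b + 1)
    linarith
  have h1m : 1 < m := by simp [hm]; linarith
  have hmbs : m < b - s := by simp [hm]; linarith
  have hbsb : b - s < b := by linarith
  set C : ℝ := 2 * Real.sqrt ((b + 1) * (b ^ 2 - 1)) with hC
  have hX : (0:ℝ) < (b + 1) * (b ^ 2 - 1) := by nlinarith
  have hC0 : 0 < C := by
    rw [hC]
    have := Real.sqrt_pos.2 hX
    linarith
  have hint := aux_integrable a b t ha hab ht1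
  -- split the integral
  have hp1 : IntervalIntegrable f volume 1 m :=
    hint.mono_set (by
      rw [uIcc_of_le h1m.le, uIcc_of_le hb.le]
      exact Icc_subset_Icc le_rfl (by linarith))
  have hp2 : IntervalIntegrable f volume m (b - s) :=
    hint.mono_set (by
      rw [uIcc_of_le hmbs.le, uIcc_of_le hb.le]
      exact Icc_subset_Icc (by linarith) (by linarith))
  have hp3 : IntervalIntegrable f volume (b - s) b :=
    hint.mono_set (by
      rw [uIcc_of_le hbsb.le, uIcc_of_le hb.le]
      exact Icc_subset_Icc (by linarith) le_rfl)
  have hsplit : (∫ z in (1:ℝ)..b, f z)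
      = (∫ z in (1:ℝ)..m, f z) + (∫ z in m..(b - s), f z) + (∫ z in (b - s)..b, f z) := by
    rw [integral_add_adjacent_intervals hp1 hp2, integral_add_adjacent_intervals
      (hp1.trans hp2) hp3]
  have hn1 : 0 ≤ ∫ z in (1:ℝ)..m, f z :=
    integral_nonneg h1m.le (fun u _ => Real.sqrt_nonneg _)
  have hn3 : 0 ≤ ∫ z in (b - s)..b, f z :=
    integral_nonneg hbsb.le (fun u _ => Real.sqrt_nonneg _)
  -- pointwise lower bound on [m, b - s]
  have hpt : ∀ z ∈ Icc m (b - s), C⁻¹ * (b - z)⁻¹ ≤ f z := by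
    intro z hz
    obtain ⟨hz1, hz2⟩ := hz
    have hzb : z < b := by linarith
    have hz1' : 1 < z := by linarith
    have hv : 0 < b - z := by linarith
    have hden1 : 0 < t ^ 2 - z ^ 2 := by
      have : z ^ 2 < t ^ 2 := by
        have := pow_lt_pow_left₀ (show z < t by linarith) (by linarith) (two_ne_zero)
        exact this
      linarith
    have hden2 : 0 < z ^ 2 - 1 := by nlinarith [hz1']
    have hdle : (t ^ 2 - z ^ 2) * (z ^ 2 - 1) * (b - z) ≤ (C * (b - z)) ^ 2 := by
      have h1 : t ^ 2 - z ^ 2 ≤ 4 * (b + 1) * (b - z) := by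
        have ha1 : t - z ≤ 2 * (b - z) := by
          have : s ≤ b - z := by linarith
          have : t - z = s + (b - z) := by rw [hs]; ring
          linarith
        have ha2 : t + z ≤ 2 * (b + 1) := by linarith
        have ha3 : (t + z) * (t - z) ≤ (2 * (b + 1)) * (2 * (b - z)) :=
          mul_le_mul ha2 ha1 (by linarith) (by linarith)
        have : t ^ 2 - z ^ 2 = (t + z) * (t - z) := by ring
        linarith [ha3]
      have h2 : z ^ 2 - 1 ≤ b ^ 2 - 1 := by
        have : z ^ 2 ≤ b ^ 2 := pow_le_pow_left₀ (by linarith) (by linarith) 2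
        linarith
      have hCsq : C ^ 2 = 4 * ((b + 1) * (b ^ 2 - 1)) := by
        rw [hC, mul_pow, Real.sq_sqrt hX.le]; norm_num
      calc (t ^ 2 - z ^ 2) * (z ^ 2 - 1) * (b - z)
          ≤ (4 * (b + 1) * (b - z)) * (b ^ 2 - 1) * (b - z) := by
            apply mul_le_mul_of_nonneg_right _ hv.le
            exact mul_le_mul h1 h2 hden2.le (by positivity)
        _ = (C * (b - z)) ^ 2 := by rw [mul_pow, hCsq]; ring
    have hfrac : ((C * (b - z)) ^ 2)⁻¹ ≤ (z + a) / ((t ^ 2 - z ^ 2) * (z ^ 2 - 1) * (b - z)) := by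
      rw [inv_eq_one_div]
      apply div_le_div₀ (by linarith) (by linarith) (by positivity) hdle
    calc C⁻¹ * (b - z)⁻¹ = Real.sqrt (((C * (b - z)) ^ 2)⁻¹) := by
          rw [Real.sqrt_inv, Real.sqrt_sq (by positivity), mul_inv]
          rw [hC, mul_inv, mul_inv]
      _ ≤ f z := Real.sqrt_le_sqrt hfrac
  -- compare with explicit integral
  have hcont : IntervalIntegrable (fun z : ℝ => C⁻¹ * (b - z)⁻¹) volume m (b - s) := by
    apply ContinuousOn.intervalIntegrable
    apply ContinuousOn.mul continuousOn_const
    apply ContinuousOn.inv₀ (by fun_prop)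
    intro x hx h0
    rw [uIcc_of_le hmbs.le] at hx
    have hxb : x ≤ b - s := hx.2
    have hbx : b - x = 0 := h0
    linarith
  have hmono : (∫ z in m..(b - s), C⁻¹ * (b - z)⁻¹) ≤ ∫ z in m..(b - s), f z :=
    integral_mono_on hmbs.le hcont hp2 hpt
  -- compute the explicit integral
  have hcomp : (∫ z in m..(b - s), C⁻¹ * (b - z)⁻¹)
      = C⁻¹ * (Real.log ((b - 1) / 2) - Real.log s) := by
    rw [intervalIntegral.integral_const_mul]
    congr 1
    have := integral_comp_sub_left (a := m) (b := b - s) (fun u : ℝ => u⁻¹) b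
    rw [this]
    rw [integral_inv (by
      rw [uIcc_of_le (by linarith)]
      intro hmem
      have := hmem.1
      simp at this ⊢
      linarith)]
    have : b - m = (b - 1) / 2 := by rw [hm]; ring
    rw [show b - (b - s) = s by ring, this,
      Real.log_div (ne_of_gt (by linarith : (0:ℝ) < (b - 1) / 2)) (ne_of_gt hs0)]
  calc C⁻¹ * (Real.log ((b - 1) / 2) - Real.log (t - b))
      = ∫ z in m..(b - s), C⁻¹ * (b - z)⁻¹ := by rw [hcomp, hs]
    _ ≤ ∫ z in m..(b - s), f z := hmono
    _ ≤ (∫ z in (1:ℝ)..m, f z) + (∫ z in m..(b - s), f z) + (∫ z in (b - s)..b, f z) := by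
        linarith
    _ = ∫ z in (1:ℝ)..b, f z := hsplit.symm


theorem stmt4 (a b : ℝ) (ha : 1 < a) (hab : a ≤ b) :
    Tendsto (fun t : ℝ => J4 a b t) (𝓝[>] b) atTop := by
  have hb : 1 < b := lt_of_lt_of_le ha hab
  have hX : (0:ℝ) < (b + 1) * (b ^ 2 - 1) := by nlinarith
  set c : ℝ := (2 * Real.sqrt ((b + 1) * (b ^ 2 - 1)))⁻¹ with hc
  have hc0 : 0 < c := by
    rw [hc]
    have := Real.sqrt_pos.2 hX
    positivity
  have hmain : Tendsto (fun t : ℝ => c * (Real.log ((b - 1) / 2) - Real.log (t - b)))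
      (𝓝[>] b) atTop := by
    apply Tendsto.const_mul_atTop hc0
    have h1 : Tendsto (fun t : ℝ => t - b) (𝓝[>] b) (𝓝[>] (0:ℝ)) := by
      rw [tendsto_nhdsWithin_iff]
      constructor
      · have : Tendsto (fun t : ℝ => t - b) (𝓝 b) (𝓝 (b - b)) :=
          (continuous_id.sub continuous_const).tendsto b
        simpa using this.mono_left nhdsWithin_le_nhds
      · filter_upwards [self_mem_nhdsWithin] with x hx
        simpa using (sub_pos.2 (mem_Ioi.mp hx))
    have h2 : Tendsto (fun t : ℝ => Real.log (t - b)) (𝓝[>] b) atBot :=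
      Real.tendsto_log_nhdsGT_zero.comp h1
    have h3 : Tendsto (fun t : ℝ => -Real.log (t - b)) (𝓝[>] b) atTop :=
      tendsto_neg_atBot_atTop.comp h2
    have := tendsto_atTop_add_const_left _ (Real.log ((b - 1) / 2)) h3
    simpa [sub_eq_add_neg] using this
  refine tendsto_atTop_mono' _ ?_ hmain
  have hmem : Ioo b (b + min ((b - 1) / 2) 1) ∈ 𝓝[>] b :=
    Ioo_mem_nhdsGT_of_mem ⟨le_rfl, by
      have : (0:ℝ) < min ((b - 1) / 2) 1 := lt_min (by linarith) one_pos
      linarith⟩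
  filter_upwards [hmem] with t ht
  rw [J4]
  exact aux_lower a b t ha hab ht.1 ht.2
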